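/- Let 0 < q < 1, let n ≥ 1 be an integer, let α > −1 be real, and let m ≥ 0 be real. Then for all x > 0, the q-derivative at x of the function G(x) := ( x^{m+α+1} / (−x; q)_∞ ) · ( ((1−q^m)/x)·L_n^{α}(x/q; q) + q^{α}·L_{n−1}^{α+1}(x; q) ) equals ( x^{m+α} / (−x; q)_∞ ) · ( (1−q^{m+α})·[m]_q/x + q^{m+α}·([n]_q − [m]_q) ) · L_n^{α}(x; q). -/

import Mathlib

/-- The Jackson `q`-derivative `(D_q f)(x) = (f(x) - f(qx)) / ((1-q)x)`. -/
noncomputable def qDeriv (q : ℝ) (f : ℝ → ℝ) (x : ℝ) : ℝ :=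
  (f x - f (q * x)) / ((1 - q) * x)

/-- The finite q-shifted factorial `(z; q)_k`. -/
noncomputable def qPoch (z q : ℝ) (k : ℕ) : ℝ :=
  ∏ j ∈ Finset.range k, (1 - z * q ^ j)

/-- The infinite q-shifted factorial `(z; q)_∞`. -/
noncomputable def qPochInf (z q : ℝ) : ℝ :=
  ∏' j : ℕ, (1 - z * q ^ j)

/-- The q-bracket `[m]_q = (1 - q^m)/(1 - q)` for a real `m` (rpow). -/
noncomputable def qBracket (q m : ℝ) : ℝ := (1 - q ^ m) / (1 - q)

/-- The q-Laguerre polynomial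
`L_n^α(x;q) = (1/(q;q)_n) Σ_{k=0}^n (q^{−n};q)_k (−x;q)_k / (q;q)_k · q^{(n+α+1)k}`. -/
noncomputable def qLaguerre (q α : ℝ) (n : ℕ) (x : ℝ) : ℝ :=
  (1 / qPoch q q n) * ∑ k ∈ Finset.range (n + 1),
    (qPoch ((q : ℝ) ^ (-(n : ℤ))) q k * qPoch (-x) q k / qPoch q q k) *
      q ^ (((n : ℝ) + α + 1) * (k : ℝ))

section auxLemmas

lemma qPoch_zero (z q : ℝ) : qPoch z q 0 = 1 := by simp [qPoch]

lemma qPoch_succ (z q : ℝ) (k : ℕ) :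
    qPoch z q (k+1) = qPoch z q k * (1 - z * q ^ k) := Finset.prod_range_succ _ _

lemma qPoch_succ' (z q : ℝ) (k : ℕ) :
    qPoch z q (k+1) = qPoch (z*q) q k * (1 - z) := by
  simp only [qPoch]
  rw [Finset.prod_range_succ']
  simp only [pow_zero, mul_one]
  congr 1
  exact Finset.prod_congr rfl fun j _ => by ring

lemma qPoch_q_pos {q : ℝ} (hq : 0 < q) (hq1 : q < 1) (k : ℕ) : 0 < qPoch q q k := by
  apply Finset.prod_pos
  intro j _
  have h1 : q ^ j ≤ 1 := pow_le_one₀ hq.le hq1.le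
  nlinarith [pow_pos hq j]

lemma qPoch_q_ne {q : ℝ} (hq : 0 < q) (hq1 : q < 1) (k : ℕ) : qPoch q q k ≠ 0 :=
  (qPoch_q_pos hq hq1 k).ne'

lemma one_sub_qpow_pos {q : ℝ} (hq : 0 < q) (hq1 : q < 1) (k : ℕ) : 0 < 1 - q * q ^ k := by
  have h1 : q ^ k ≤ 1 := pow_le_one₀ hq.le hq1.le
  nlinarith [pow_pos hq k]

lemma hUV {q : ℝ} (hq0 : q ≠ 0) (m k : ℕ) :
    qPoch (q ^ (-((m:ℤ)+1))) q (k+1)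
      = qPoch (q ^ (-(m:ℤ))) q k * (1 - q ^ (-((m:ℤ)+1))) := by
  rw [qPoch_succ']
  congr 2
  rw [show (-(m:ℤ)) = -((m:ℤ)+1) + 1 by ring, zpow_add₀ hq0, zpow_one]

lemma qPoch_top_zero {q : ℝ} (hq0 : q ≠ 0) (m : ℕ) :
    qPoch (q ^ (-(m:ℤ))) q (m+1) = 0 := by
  apply Finset.prod_eq_zero (Finset.self_mem_range_succ m)
  rw [zpow_neg, zpow_natCast, inv_mul_cancel₀ (pow_ne_zero _ hq0)]
  ring

lemma qPoch_negshift (q x : ℝ) (k : ℕ) :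
    qPoch (-x) q (k+1) = qPoch (-(q*x)) q k * (1+x) := by
  rw [qPoch_succ']
  congr 2 <;> ring

lemma rpow_mul_succ {q : ℝ} (hq : 0 < q) (c : ℝ) (k : ℕ) :
    q ^ (c * ((k:ℝ)+1)) = q ^ (c * (k:ℝ)) * q ^ c := by
  rw [mul_add, mul_one, Real.rpow_add hq]

lemma sumB (q α x : ℝ) (hq : 0 < q) (hq1 : q < 1) (m : ℕ) :
    ∑ k ∈ Finset.range (m+1+1),
        (qPoch (q ^ (-((m:ℤ)+1))) q k * qPoch (-x) q k / qPoch q q k)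
          * q ^ (((m:ℝ)+1 + α + 1) * (k:ℝ))
      = ∑ k ∈ Finset.range (m+1),
          (qPoch (q ^ (-(m:ℤ))) q k * qPoch (-x) q k / qPoch q q k)
            * q ^ (((m:ℝ) + (α+1) + 1) * (k:ℝ))
        - q^(α+1) * ((1+x) * ∑ k ∈ Finset.range (m+1),
          (qPoch (q ^ (-(m:ℤ))) q k * qPoch (-(q*x)) q k / qPoch q q k)
            * q ^ (((m:ℝ) + (α+1) + 1) * (k:ℝ))) := by
  have hq0 : q ≠ 0 := hq.ne'
  have hexp : ((m:ℝ)+1 + α + 1) = ((m:ℝ) + (α+1) + 1) := by ring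
  rw [hexp]
  set c : ℝ := ((m:ℝ) + (α+1) + 1) with hc
  set G : ℕ → ℝ := fun k =>
    (qPoch (q ^ (-(m:ℤ))) q k * qPoch (-x) q k / qPoch q q k) * q ^ (c * (k:ℝ)) with hG
  have hGtop : G (m+1) = 0 := by
    simp only [hG, qPoch_top_zero hq0 m]
    ring
  have hS1 : ∑ k ∈ Finset.range (m+1), G k
      = (∑ k ∈ Finset.range (m+1), G (k+1)) + G 0 := by
    rw [Finset.sum_range_succ (fun k => G (k+1)) m]
    rw [hGtop, add_zero, ← Finset.sum_range_succ' G m]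
  rw [hS1, Finset.mul_sum, Finset.mul_sum,
    Finset.sum_range_succ' (fun k =>
      (qPoch (q ^ (-((m:ℤ)+1))) q k * qPoch (-x) q k / qPoch q q k) * q ^ (c * (k:ℝ))) (m+1)]
  rw [add_sub_right_comm, ← Finset.sum_sub_distrib]
  congr 1
  · apply Finset.sum_congr rfl
    intro k _
    simp only [hG]
    push_cast
    rw [hUV hq0 m k, qPoch_succ (q ^ (-(m:ℤ))) q k, qPoch_succ q q k,
      qPoch_negshift q x k, rpow_mul_succ hq c k]
    have hcq : q ^ c = q ^ (α+1) * (q^m * q) := by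
      rw [hc, show ((m:ℝ) + (α+1) + 1) = (α+1) + (m:ℝ) + 1 by ring, Real.rpow_add hq,
        Real.rpow_add hq, Real.rpow_natCast, Real.rpow_one, mul_assoc]
    rw [hcq]
    have hu : q ^ (-((m:ℤ)+1)) = (q^m * q)⁻¹ := by
      rw [show (-((m:ℤ)+1)) = -(((m+1:ℕ)):ℤ) by push_cast; ring, zpow_neg, zpow_natCast,
        pow_succ]
    have hv : q ^ (-(m:ℤ)) = (q^m)⁻¹ := by rw [zpow_neg, zpow_natCast]
    rw [hu, hv]
    have h1 : qPoch q q k ≠ 0 := qPoch_q_ne hq hq1 k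
    have h2 : (1:ℝ) - q * q ^ k ≠ 0 := (one_sub_qpow_pos hq hq1 k).ne'
    have h3 : q ^ m ≠ 0 := pow_ne_zero _ hq0
    field_simp
    ring

lemma qPoch_divshift {q : ℝ} (hq0 : q ≠ 0) (x : ℝ) (k : ℕ) :
    qPoch (-(x/q)) q (k+1) = qPoch (-x) q k * (1 + x/q) := by
  rw [qPoch_succ', show (-(x/q)*q) = -x by field_simp, show (1 - -(x/q)) = 1+x/q by ring]

lemma sumA (q α x : ℝ) (hq : 0 < q) (hq1 : q < 1) (m : ℕ) :
    ∑ k ∈ Finset.range (m+1+1),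
        (qPoch (q ^ (-((m:ℤ)+1))) q k * qPoch (-(x/q)) q k / qPoch q q k)
          * q ^ (((m:ℝ)+1 + α + 1) * (k:ℝ))
      = ∑ k ∈ Finset.range (m+1+1),
          (qPoch (q ^ (-((m:ℤ)+1))) q k * qPoch (-x) q k / qPoch q q k)
            * q ^ (((m:ℝ)+1 + α + 1) * (k:ℝ))
        - q^α * x * (1 - q*q^m) * ∑ k ∈ Finset.range (m+1),
          (qPoch (q ^ (-(m:ℤ))) q k * qPoch (-x) q k / qPoch q q k)
            * q ^ (((m:ℝ) + (α+1) + 1) * (k:ℝ)) := by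
  have hq0 : q ≠ 0 := hq.ne'
  have hexp : ((m:ℝ)+1 + α + 1) = ((m:ℝ) + (α+1) + 1) := by ring
  rw [hexp]
  set c : ℝ := ((m:ℝ) + (α+1) + 1) with hc
  rw [Finset.mul_sum,
    Finset.sum_range_succ' (fun k =>
      (qPoch (q ^ (-((m:ℤ)+1))) q k * qPoch (-(x/q)) q k / qPoch q q k) * q ^ (c * (k:ℝ))) (m+1),
    Finset.sum_range_succ' (fun k =>
      (qPoch (q ^ (-((m:ℤ)+1))) q k * qPoch (-x) q k / qPoch q q k) * q ^ (c * (k:ℝ))) (m+1)]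
  rw [add_sub_right_comm, ← Finset.sum_sub_distrib]
  congr 1
  · apply Finset.sum_congr rfl
    intro k _
    push_cast
    rw [hUV hq0 m k, qPoch_succ (-x) q k, qPoch_succ q q k,
      qPoch_divshift hq0 x k, rpow_mul_succ hq c k]
    have hcq : q ^ c = q ^ α * q^m * q * q := by
      rw [hc, show ((m:ℝ) + (α+1) + 1) = ((α + (m:ℝ)) + 1) + 1 by ring, Real.rpow_add hq,
        Real.rpow_add hq, Real.rpow_add hq, Real.rpow_natCast, Real.rpow_one]
    rw [hcq]
    have hu : q ^ (-((m:ℤ)+1)) = (q^m * q)⁻¹ := by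
      rw [show (-((m:ℤ)+1)) = -(((m+1:ℕ)):ℤ) by push_cast; ring, zpow_neg, zpow_natCast,
        pow_succ]
    have hv : q ^ (-(m:ℤ)) = (q^m)⁻¹ := by rw [zpow_neg, zpow_natCast]
    rw [hu, hv]
    have h1 : qPoch q q k ≠ 0 := qPoch_q_ne hq hq1 k
    have h2 : (1:ℝ) - q * q ^ k ≠ 0 := (one_sub_qpow_pos hq hq1 k).ne'
    have h3 : q ^ m ≠ 0 := pow_ne_zero _ hq0
    field_simp
    ring

lemma lemA (q α x : ℝ) (hq : 0 < q) (hq1 : q < 1) (m : ℕ) :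
    qLaguerre q α (m+1) (x/q)
      = qLaguerre q α (m+1) x - q^α * x * qLaguerre q (α+1) m x := by
  have h1 : qPoch q q m ≠ 0 := qPoch_q_ne hq hq1 m
  have h2 : (1:ℝ) - q*q^m ≠ 0 := (one_sub_qpow_pos hq hq1 m).ne'
  simp only [qLaguerre]
  push_cast
  rw [qPoch_succ q q m, sumA q α x hq hq1 m]
  field_simp

lemma lemB (q α x : ℝ) (hq : 0 < q) (hq1 : q < 1) (m : ℕ) :
    (1 - q*q^m) * qLaguerre q α (m+1) x
      = qLaguerre q (α+1) m x - q^(α+1) * ((1+x) * qLaguerre q (α+1) m (q*x)) := by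
  have h1 : qPoch q q m ≠ 0 := qPoch_q_ne hq hq1 m
  have h2 : (1:ℝ) - q*q^m ≠ 0 := (one_sub_qpow_pos hq hq1 m).ne'
  simp only [qLaguerre]
  push_cast
  rw [qPoch_succ q q m, sumB q α x hq hq1 m]
  field_simp

lemma multipliable_one_add {q x : ℝ} (hq : 0 < q) (hq1 : q < 1) (hx : 0 ≤ x) :
    Multipliable fun j : ℕ => 1 + x * q ^ j := by
  have hpos : ∀ j : ℕ, (0:ℝ) < 1 + x * q ^ j := fun j => by
    nlinarith [pow_pos hq j, mul_nonneg hx (pow_pos hq j).le]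
  have hlog : Summable fun j : ℕ => Real.log (1 + x * q ^ j) := by
    apply Summable.of_nonneg_of_le
      (fun j => Real.log_nonneg (by nlinarith [mul_nonneg hx (pow_pos hq j).le]))
      (fun j => ?_) ((summable_geometric_of_lt_one hq.le hq1).mul_left x)
    have := Real.log_le_sub_one_of_pos (hpos j)
    linarith
  exact Real.multipliable_of_summable_log hpos hlog

lemma qPochInf_eq {q x : ℝ} : qPochInf (-x) q = ∏' j : ℕ, (1 + x * q ^ j) := by
  unfold qPochInf
  exact tprod_congr fun j => by ring

lemma qPochInf_one_le {q x : ℝ} (hq : 0 < q) (hq1 : q < 1) (hx : 0 ≤ x) :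
    1 ≤ qPochInf (-x) q := by
  rw [qPochInf_eq]
  refine ge_of_tendsto' (multipliable_one_add hq hq1 hx).hasProd fun s => ?_
  calc (1:ℝ) = ∏ j ∈ s, 1 := by simp
  _ ≤ ∏ j ∈ s, (1 + x * q ^ j) := by
      apply Finset.prod_le_prod (fun j _ => by norm_num)
      intro j _
      nlinarith [mul_nonneg hx (pow_pos hq j).le]

lemma qPochInf_shift {q x : ℝ} (hq : 0 < q) (hq1 : q < 1) (hx : 0 ≤ x) :
    qPochInf (-x) q = (1 + x) * qPochInf (-(q*x)) q := by
  rw [qPochInf_eq, qPochInf_eq]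
  have hfun : (fun b : ℕ => 1 + x * q ^ (b+1)) = fun b : ℕ => 1 + (q*x) * q ^ b :=
    funext fun b => by ring
  have hmul : Multipliable fun b : ℕ => 1 + x * q ^ (b+1) := by
    rw [hfun]
    exact multipliable_one_add hq hq1 (by positivity)
  rw [tprod_eq_zero_mul' (f := fun j : ℕ => 1 + x * q ^ j) hmul]
  simp only [pow_zero, mul_one]
  congr 1
  rw [hfun]

end auxLemmas

/-- Indefinite q-integral for q-Laguerre polynomials. -/
theorem qIntegral_qLaguerre (q α m : ℝ) (hq : 0 < q) (hq1 : q < 1)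
    (n : ℕ) (hn : 1 ≤ n) (hα : -1 < α) (hm : 0 ≤ m) :
    ∀ x : ℝ, 0 < x →
      qDeriv q
        (fun t => t ^ (m + α + 1) / qPochInf (-t) q *
          ((1 - q ^ m) / t * qLaguerre q α n (t / q)
            + q ^ α * qLaguerre q (α + 1) (n - 1) t)) x
      = x ^ (m + α) / qPochInf (-x) q *
          ((1 - q ^ (m + α)) * qBracket q m / x
            + q ^ (m + α) * (qBracket q (n : ℝ) - qBracket q m)) *
          qLaguerre q α n x := by
  intro x hx
  obtain ⟨N, rfl⟩ : ∃ N, n = N + 1 := ⟨n - 1, (Nat.succ_pred_eq_of_pos hn).symm⟩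
  have hq0 : q ≠ 0 := hq.ne'
  have hx0 : x ≠ 0 := hx.ne'
  have h1x : (0:ℝ) < 1 + x := by linarith
  have hP1 : 1 ≤ qPochInf (-x) q := qPochInf_one_le hq hq1 hx.le
  have hP : qPochInf (-x) q ≠ 0 := by linarith
  have hPq : qPochInf (-(q*x)) q = qPochInf (-x) q / (1+x) := by
    rw [qPochInf_shift hq hq1 hx.le, mul_div_cancel_left₀ _ h1x.ne']
  have hMq : qLaguerre q (α+1) N (q*x)
      = (qLaguerre q (α+1) N x - (1 - q*q^N) * qLaguerre q α (N+1) x) / (q^(α+1) * (1+x)) := by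
    have h := lemB q α x hq hq1 N
    have hne : q^(α+1) * (1+x) ≠ 0 := mul_ne_zero (Real.rpow_pos_of_pos hq _).ne' h1x.ne'
    field_simp
    linarith [h]
  simp only [qDeriv, qBracket, Nat.add_sub_cancel]
  rw [mul_div_cancel_left₀ x hq0]
  rw [lemA q α x hq hq1 N, hMq, hPq]
  rw [Real.mul_rpow hq.le hx.le]
  rw [Real.rpow_add_one hx0 (m+α), Real.rpow_add_one hq0 (m+α), Real.rpow_add hq m α,
      Real.rpow_natCast q (N+1), pow_succ', Real.rpow_add_one hq0 α]
  have hμ : (0:ℝ) < q ^ m := Real.rpow_pos_of_pos hq m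
  have hA : (0:ℝ) < q ^ α := Real.rpow_pos_of_pos hq α
  have hX : (0:ℝ) < x ^ (m+α) := Real.rpow_pos_of_pos hx _
  have hq' : (1:ℝ) - q ≠ 0 := by linarith
  field_simp
  ring
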